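/- For all n ≥ 1 and q ≥ 1: Σ over tuples (k₁,…,k_m) of nonnegative integers summing to n of C(n; k₁,…,k_m) · (Σ_{i=1}^m k_i^q) = n · m^{n−(q−1)} · Σ_{k=1}^{q} S(q,k) · (Σ_{j=1}^{k} (−1)^{k−j} s(k,j) n^{j−1}) · m^{q−k}, for every m ≥ 1. -/

import Mathlib

open Finset

/-- Stirling numbers of the second kind. -/
def stirling2 : ℕ → ℕ → ℕ
  | 0, 0 => 1
  | 0, _ + 1 => 0
  | _ + 1, 0 => 0
  | n + 1, k + 1 => (k + 1) * stirling2 n (k + 1) + stirling2 n k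

/-- Unsigned Stirling numbers of the first kind. -/
def stirling1 : ℕ → ℕ → ℕ
  | 0, 0 => 1
  | 0, _ + 1 => 0
  | _ + 1, 0 => 0
  | n + 1, k + 1 => n * stirling1 n (k + 1) + stirling1 n k

namespace MPSAux

open Nat

lemma key_scalar {m : ℕ} (k : Fin m → ℕ) (i : Fin m) (r : ℕ) :
    Nat.multinomial univ (Function.update k i (k i + r)) * (k i + r).descFactorial r
      = ((∑ j, k j) + r).descFactorial r * Nat.multinomial univ k := by
  have hP : 0 < ∏ j, (k j)! := prod_pos fun j _ => Nat.factorial_pos _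
  apply Nat.eq_of_mul_eq_mul_left hP
  have hfd : (k i)! * (k i + r).descFactorial r = (k i + r)! := by
    have := Nat.factorial_mul_descFactorial (n := k i + r) (k := r) (Nat.le_add_left _ _)
    simpa using this
  have hprodsplit : ∏ j, (k j)! = (k i)! * ∏ j ∈ univ \ {i}, (k j)! := by
    rw [← Finset.erase_eq]; exact (Finset.mul_prod_erase univ _ (mem_univ i)).symm
  have hprodup : ∏ j, ((Function.update k i (k i + r)) j)! = (k i + r)! * ∏ j ∈ univ \ {i}, (k j)! := by
    rw [show (fun j => ((Function.update k i (k i + r)) j)!) = Function.update (fun j => (k j)!) i ((k i + r)!) by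
      funext j; exact (Function.apply_update (fun _ x => x !) k i (k i + r) j)]
    exact Finset.prod_update_of_mem (mem_univ i) _ _
  have hsumup : ∑ j, (Function.update k i (k i + r)) j = (∑ j, k j) + r := by
    rw [Finset.sum_update_of_mem (mem_univ i), ← Finset.erase_eq,
      ← Finset.add_sum_erase univ k (mem_univ i)]
    ring
  have spec1 := Nat.multinomial_spec (univ : Finset (Fin m)) (Function.update k i (k i + r))
  have spec2 := Nat.multinomial_spec (univ : Finset (Fin m)) k
  have hfd2 : (∑ j, k j)! * ((∑ j, k j) + r).descFactorial r = ((∑ j, k j) + r)! := by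
    have := Nat.factorial_mul_descFactorial (n := (∑ j, k j) + r) (k := r) (Nat.le_add_left _ _)
    simpa using this
  calc (∏ j, (k j)!) * (Nat.multinomial univ (Function.update k i (k i + r)) * (k i + r).descFactorial r)
      = ((k i)! * (k i + r).descFactorial r) * (∏ j ∈ univ \ {i}, (k j)!) * Nat.multinomial univ (Function.update k i (k i + r)) := by
        rw [hprodsplit]; ring
    _ = (∏ j, ((Function.update k i (k i + r)) j)!) * Nat.multinomial univ (Function.update k i (k i + r)) := by
        rw [hfd, hprodup]
    _ = ((∑ j, k j) + r)! := by rw [spec1, hsumup]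
    _ = ((∑ j, k j) + r).descFactorial r * (∑ j, k j)! := by rw [← hfd2]; ring
    _ = (∏ j, (k j)!) * (((∑ j, k j) + r).descFactorial r * Nat.multinomial univ k) := by
        rw [← spec2]; ring

lemma adt_eq (m n : ℕ) : Finset.Nat.antidiagonalTuple m n = Finset.piAntidiag (univ : Finset (Fin m)) n := by
  ext f; simp [Finset.Nat.mem_antidiagonalTuple, Finset.mem_piAntidiag]

lemma sum_mult (m n : ℕ) : ∑ k ∈ Finset.Nat.antidiagonalTuple m n, Nat.multinomial univ k = m ^ n := by
  rw [adt_eq]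
  have := Finset.sum_pow_eq_sum_piAntidiag (univ : Finset (Fin m)) (fun _ => (1:ℕ)) n
  simpa using this.symm

lemma sum_mult_desc (m n r : ℕ) (i : Fin m) :
    ∑ k ∈ Finset.Nat.antidiagonalTuple m n, Nat.multinomial univ k * (k i).descFactorial r
      = n.descFactorial r * m ^ (n - r) := by
  rcases lt_or_ge n r with h | h
  · rw [Nat.descFactorial_eq_zero_iff_lt.2 h, zero_mul]
    apply Finset.sum_eq_zero
    intro k hk
    rw [Finset.Nat.mem_antidiagonalTuple] at hk
    have : k i ≤ n := hk ▸ Finset.single_le_sum (f := k) (fun _ _ => Nat.zero_le _) (mem_univ i)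
    rw [Nat.descFactorial_eq_zero_iff_lt.2 (lt_of_le_of_lt this h), mul_zero]
  · rw [← Finset.sum_filter_of_ne (p := fun k => r ≤ k i)
      (by intro k _ hne; by_contra hlt; push_neg at hlt
          rw [Nat.descFactorial_eq_zero_iff_lt.2 hlt, mul_zero] at hne; exact hne rfl)]
    rw [show n.descFactorial r * m ^ (n - r)
        = ∑ k ∈ Finset.Nat.antidiagonalTuple m (n - r), n.descFactorial r * Nat.multinomial univ k by
      rw [← Finset.mul_sum, sum_mult]]
    refine Finset.sum_nbij' (fun k => Function.update k i (k i - r))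
      (fun k => Function.update k i (k i + r)) ?_ ?_ ?_ ?_ ?_
    · intro k hk
      simp only [Finset.mem_filter, Finset.Nat.mem_antidiagonalTuple] at hk ⊢
      rw [Finset.sum_update_of_mem (mem_univ i), ← Finset.erase_eq,
        ← Finset.add_sum_erase univ k (mem_univ i)] at *
      omega
    · intro k hk
      simp only [Finset.mem_filter, Finset.Nat.mem_antidiagonalTuple] at hk ⊢
      rw [Finset.sum_update_of_mem (mem_univ i), ← Finset.erase_eq,
        ← Finset.add_sum_erase univ k (mem_univ i)] at *
      simp only [Function.update_self] at *
      omega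
    · intro k hk
      simp only [Finset.mem_filter] at hk
      simp only [Function.update_self, Function.update_idem]
      rw [Nat.sub_add_cancel hk.2, Function.update_eq_self]
    · intro k hk
      simp only [Function.update_self, Function.update_idem, Nat.add_sub_cancel,
        Function.update_eq_self]
    · intro k hk
      simp only [Finset.mem_filter, Finset.Nat.mem_antidiagonalTuple] at hk
      have hr : r ≤ k i := hk.2
      have hsum := Finset.add_sum_erase univ k (mem_univ i)
      have := key_scalar (Function.update k i (k i - r)) i r
      simp only [Function.update_self, Function.update_idem] at this
      rw [Nat.sub_add_cancel hr, Function.update_eq_self] at this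
      rw [Finset.sum_update_of_mem (mem_univ i), ← Finset.erase_eq] at this
      rw [this]
      have h2 : k i - r + ∑ x ∈ univ.erase i, k x + r = n := by omega
      rw [h2]

lemma stirling2_eq_zero : ∀ q r : ℕ, q < r → stirling2 q r = 0
  | 0, 0, h => absurd h (by omega)
  | 0, _ + 1, _ => rfl
  | q + 1, 0, h => absurd h (by omega)
  | q + 1, r + 1, h => by
      rw [stirling2, stirling2_eq_zero q (r+1) (by omega), stirling2_eq_zero q r (by omega)]; ring

lemma stirling1_eq_zero : ∀ q r : ℕ, q < r → stirling1 q r = 0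
  | 0, 0, h => absurd h (by omega)
  | 0, _ + 1, _ => rfl
  | q + 1, 0, h => absurd h (by omega)
  | q + 1, r + 1, h => by
      rw [stirling1, stirling1_eq_zero q (r+1) (by omega), stirling1_eq_zero q r (by omega)]; ring

lemma mul_desc (x r : ℕ) : x * x.descFactorial r = x.descFactorial (r+1) + r * x.descFactorial r := by
  rcases le_or_gt r x with h | h
  · rw [Nat.descFactorial_succ]
    have hx : x - r + r = x := by omega
    calc x * x.descFactorial r = (x - r + r) * x.descFactorial r := by rw [hx]
      _ = (x - r) * x.descFactorial r + r * x.descFactorial r := by ring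
  · rw [Nat.descFactorial_eq_zero_iff_lt.2 h, Nat.descFactorial_eq_zero_iff_lt.2 (by omega)]
    ring

lemma pow_eq_sum_stirling2 (x : ℕ) : ∀ q : ℕ,
    x ^ q = ∑ r ∈ range (q+1), stirling2 q r * x.descFactorial r
  | 0 => by simp [stirling2]
  | q + 1 => by
    have IH := pow_eq_sum_stirling2 x q
    have key : ∑ r ∈ range (q+1), (r+1) * stirling2 q (r+1) * x.descFactorial (r+1)
        = ∑ r ∈ range (q+1), r * stirling2 q r * x.descFactorial r := by
      have h1 := Finset.sum_range_succ' (fun r => r * stirling2 q r * x.descFactorial r) (q+1)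
      have h2 := Finset.sum_range_succ (fun r => r * stirling2 q r * x.descFactorial r) (q+1)
      simp only [stirling2_eq_zero q (q+1) (by omega), Nat.mul_zero, Nat.zero_mul,
        Nat.add_zero, Nat.zero_add, mul_zero, zero_mul, add_zero] at h1 h2
      omega
    calc x ^ (q+1) = ∑ r ∈ range (q+1), stirling2 q r * (x * x.descFactorial r) := by
          rw [pow_succ, IH, Finset.sum_mul]
          exact Finset.sum_congr rfl fun r _ => by ring
      _ = ∑ r ∈ range (q+1), (stirling2 q r * x.descFactorial (r+1)
            + r * stirling2 q r * x.descFactorial r) := by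
          exact Finset.sum_congr rfl fun r _ => by rw [mul_desc]; ring
      _ = ∑ r ∈ range (q+1), stirling2 q r * x.descFactorial (r+1)
            + ∑ r ∈ range (q+1), r * stirling2 q r * x.descFactorial r := Finset.sum_add_distrib
      _ = ∑ r ∈ range (q+1), stirling2 q r * x.descFactorial (r+1)
            + ∑ r ∈ range (q+1), (r+1) * stirling2 q (r+1) * x.descFactorial (r+1) := by rw [key]
      _ = ∑ r ∈ range (q+1), stirling2 (q+1) (r+1) * x.descFactorial (r+1) := by
          rw [← Finset.sum_add_distrib]
          exact Finset.sum_congr rfl fun r _ => by rw [stirling2]; ring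
      _ = ∑ r ∈ range (q+2), stirling2 (q+1) r * x.descFactorial r := by
          rw [Finset.sum_range_succ' (fun r => stirling2 (q+1) r * x.descFactorial r) (q+1)]
          simp [stirling2]

lemma sum_stirling1_eq_prod (x : ℝ) : ∀ k : ℕ,
    ∑ j ∈ range (k+1), (stirling1 k j : ℝ) * x ^ j = ∏ i ∈ range k, (x + i)
  | 0 => by simp [stirling1]
  | k + 1 => by
    have IH := sum_stirling1_eq_prod x k
    have hks : (k : ℝ) * (stirling1 k 0 : ℝ) = 0 := by
      cases k with
      | zero => simp
      | succ k => simp [stirling1]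
    have shift : ∑ j ∈ range (k+1), (stirling1 k (j+1) : ℝ) * x ^ (j+1)
        = ∑ j ∈ range (k+1), (stirling1 k j : ℝ) * x ^ j - (stirling1 k 0 : ℝ) := by
      have h1 := Finset.sum_range_succ' (fun j => (stirling1 k j : ℝ) * x ^ j) k
      have h2 := Finset.sum_range_succ (fun j => (stirling1 k (j+1) : ℝ) * x ^ (j+1)) k
      simp only [stirling1_eq_zero k (k+1) (by omega), Nat.cast_zero, zero_mul, add_zero,
        pow_zero, mul_one] at h1 h2
      rw [h2, h1]
      ring
    calc ∑ j ∈ range (k+2), (stirling1 (k+1) j : ℝ) * x ^ j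
        = ∑ j ∈ range (k+1), (stirling1 (k+1) (j+1) : ℝ) * x ^ (j+1)
            + (stirling1 (k+1) 0 : ℝ) * x ^ 0 := by
          exact Finset.sum_range_succ' (fun j => (stirling1 (k+1) j : ℝ) * x ^ j) (k+1)
      _ = ∑ j ∈ range (k+1), ((k : ℝ) * ((stirling1 k (j+1) : ℝ) * x ^ (j+1))
            + x * ((stirling1 k j : ℝ) * x ^ j)) := by
          rw [show (stirling1 (k+1) 0 : ℝ) = 0 by simp [stirling1]]
          rw [zero_mul, add_zero]
          refine Finset.sum_congr rfl fun j _ => ?_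
          rw [show stirling1 (k+1) (j+1) = k * stirling1 k (j+1) + stirling1 k j from rfl]
          push_cast
          ring
      _ = (k : ℝ) * ∑ j ∈ range (k+1), (stirling1 k (j+1) : ℝ) * x ^ (j+1)
            + x * ∑ j ∈ range (k+1), (stirling1 k j : ℝ) * x ^ j := by
          rw [Finset.sum_add_distrib, Finset.mul_sum, Finset.mul_sum]
      _ = (x + k) * ∏ i ∈ range k, (x + i) := by
          rw [shift, IH, mul_sub, hks]
          ring
      _ = ∏ i ∈ range (k+1), (x + i) := by rw [Finset.prod_range_succ]; ring

lemma castDescFactorial (n : ℕ) : ∀ k : ℕ, (n.descFactorial k : ℝ) = ∏ i ∈ range k, ((n:ℝ) - i)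
  | 0 => by simp
  | k + 1 => by
    rw [Finset.prod_range_succ, ← castDescFactorial n k]
    rcases le_or_gt k n with h | h
    · rw [Nat.descFactorial_succ]
      push_cast [Nat.cast_sub h]
      ring
    · rw [Nat.descFactorial_eq_zero_iff_lt.2 h, Nat.descFactorial_eq_zero_iff_lt.2 (by omega)]
      simp

lemma signed_sum (n k : ℕ) (hk : 1 ≤ k) :
    ∑ j ∈ Finset.Icc 1 k, (-1:ℝ)^(k-j) * (stirling1 k j : ℝ) * (n:ℝ)^j
      = (n.descFactorial k : ℝ) := by
  have hprod : ∏ i ∈ range k, (-(n:ℝ) + i) = (-1:ℝ)^k * (n.descFactorial k : ℝ) := by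
    rw [castDescFactorial]
    calc ∏ i ∈ range k, (-(n:ℝ) + i) = ∏ i ∈ range k, (-1) * ((n:ℝ) - i) :=
          Finset.prod_congr rfl (by intros; ring)
      _ = (-1:ℝ)^k * ∏ i ∈ range k, ((n:ℝ) - i) := by
          rw [Finset.prod_mul_distrib, Finset.prod_const, Finset.card_range]
  have base := sum_stirling1_eq_prod (-(n:ℝ)) k
  rw [hprod] at base
  have h2 : ∑ j ∈ range (k+1), (-1:ℝ)^(k-j) * (stirling1 k j : ℝ) * (n:ℝ)^j
      = (n.descFactorial k : ℝ) := by
    have hterm : ∀ j ∈ range (k+1), (-1:ℝ)^(k-j) * (stirling1 k j : ℝ) * (n:ℝ)^j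
        = (-1:ℝ)^k * ((stirling1 k j : ℝ) * (-(n:ℝ))^j) := by
      intro j hj
      rw [mem_range] at hj
      have hsign : (-1:ℝ)^(k-j) = (-1:ℝ)^k * (-1:ℝ)^j := by
        have hkj : k + j = (k - j) + 2*j := by omega
        rw [← pow_add, hkj, pow_add, pow_mul]
        simp
      rw [hsign, neg_pow]
      ring
    rw [Finset.sum_congr rfl hterm, ← Finset.mul_sum, base, ← mul_assoc, ← pow_add]
    simp [pow_mul, show k + k = 2 * k by ring]
  have hins : range (k+1) = insert 0 (Finset.Icc 1 k) := by
    ext j; simp [Finset.mem_range, Finset.mem_Icc]; omega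
  rw [hins, Finset.sum_insert (by simp)] at h2
  cases k with
  | zero => omega
  | succ k' =>
    rw [show stirling1 (k'+1) 0 = 0 from rfl] at h2
    simpa using h2

end MPSAux

open MPSAux

theorem multinomial_power_sum (n q m : ℕ) (hn : 1 ≤ n) (hq : 1 ≤ q) (hm : 1 ≤ m) :
    ∑ k ∈ Finset.Nat.antidiagonalTuple m n,
        ((Nat.multinomial Finset.univ k : ℝ) * ∑ i, ((k i : ℝ)) ^ q) =
      (n : ℝ) * (m : ℝ) ^ ((n : ℤ) - ((q : ℤ) - 1)) *
        ∑ k ∈ Finset.Icc 1 q, (stirling2 q k : ℝ) *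
          (∑ j ∈ Finset.Icc 1 k, (-1 : ℝ) ^ (k - j) * (stirling1 k j : ℝ) * (n : ℝ) ^ (j - 1)) *
          (m : ℝ) ^ (q - k) := by
  have hne : (n:ℝ) ≠ 0 := Nat.cast_ne_zero.2 (by omega)
  have hmne : (m:ℝ) ≠ 0 := Nat.cast_ne_zero.2 (by omega)
  have hNat : ∀ i : Fin m, ∑ k ∈ Finset.Nat.antidiagonalTuple m n, Nat.multinomial univ k * (k i)^q
      = ∑ r ∈ range (q+1), stirling2 q r * (n.descFactorial r * m^(n-r)) := by
    intro i
    calc ∑ k ∈ Finset.Nat.antidiagonalTuple m n, Nat.multinomial univ k * (k i)^q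
        = ∑ k ∈ Finset.Nat.antidiagonalTuple m n, ∑ r ∈ range (q+1),
            stirling2 q r * (Nat.multinomial univ k * (k i).descFactorial r) := by
          refine Finset.sum_congr rfl fun k _ => ?_
          rw [pow_eq_sum_stirling2 (k i) q, Finset.mul_sum]
          exact Finset.sum_congr rfl fun r _ => by ring
      _ = ∑ r ∈ range (q+1), ∑ k ∈ Finset.Nat.antidiagonalTuple m n,
            stirling2 q r * (Nat.multinomial univ k * (k i).descFactorial r) := Finset.sum_comm
      _ = ∑ r ∈ range (q+1), stirling2 q r * (n.descFactorial r * m^(n-r)) := by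
          refine Finset.sum_congr rfl fun r _ => ?_
          rw [← Finset.mul_sum, sum_mult_desc]
  have hTot : ∑ k ∈ Finset.Nat.antidiagonalTuple m n, Nat.multinomial univ k * ∑ i, (k i)^q
      = m * ∑ r ∈ range (q+1), stirling2 q r * (n.descFactorial r * m^(n-r)) := by
    calc ∑ k ∈ Finset.Nat.antidiagonalTuple m n, Nat.multinomial univ k * ∑ i, (k i)^q
        = ∑ k ∈ Finset.Nat.antidiagonalTuple m n, ∑ i, Nat.multinomial univ k * (k i)^q :=
          Finset.sum_congr rfl fun k _ => Finset.mul_sum _ _ _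
      _ = ∑ i : Fin m, ∑ k ∈ Finset.Nat.antidiagonalTuple m n, Nat.multinomial univ k * (k i)^q :=
          Finset.sum_comm
      _ = ∑ _i : Fin m, ∑ r ∈ range (q+1), stirling2 q r * (n.descFactorial r * m^(n-r)) :=
          Finset.sum_congr rfl fun i _ => hNat i
      _ = m * ∑ r ∈ range (q+1), stirling2 q r * (n.descFactorial r * m^(n-r)) := by
          rw [Finset.sum_const, card_univ, Fintype.card_fin, smul_eq_mul]
  have hL : (∑ k ∈ Finset.Nat.antidiagonalTuple m n,
        ((Nat.multinomial Finset.univ k : ℝ) * ∑ i, ((k i : ℝ)) ^ q))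
      = (m:ℝ) * ∑ r ∈ range (q+1), (stirling2 q r : ℝ) * ((n.descFactorial r : ℝ) * (m:ℝ)^(n-r)) := by
    have := congrArg (Nat.cast : ℕ → ℝ) hTot
    push_cast at this
    exact this
  clear hTot hNat
  rw [hL]
  have hInner : ∀ kk ∈ Finset.Icc 1 q,
      (∑ j ∈ Finset.Icc 1 kk, (-1:ℝ)^(kk-j) * (stirling1 kk j : ℝ) * (n:ℝ)^(j-1))
        = (n.descFactorial kk : ℝ) / n := by
    intro kk hkk
    rw [mem_Icc] at hkk
    have h1 := signed_sum n kk hkk.1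
    rw [eq_div_iff hne, ← h1, Finset.sum_mul]
    refine Finset.sum_congr rfl fun j hj => ?_
    rw [mem_Icc] at hj
    have hp : (n:ℝ)^(j-1) * n = (n:ℝ)^j := by
      rw [← pow_succ]; congr 1; omega
    rw [mul_assoc, hp]
  calc (m:ℝ) * ∑ r ∈ range (q+1), (stirling2 q r : ℝ) * ((n.descFactorial r : ℝ) * (m:ℝ)^(n-r))
      = ∑ r ∈ Finset.Icc 1 q, (m:ℝ) * ((stirling2 q r : ℝ) * ((n.descFactorial r : ℝ) * (m:ℝ)^(n-r))) := by
        rw [Finset.mul_sum,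
          show range (q+1) = insert 0 (Finset.Icc 1 q) from by
            ext j; simp [Finset.mem_range, Finset.mem_Icc]; omega,
          Finset.sum_insert (by simp)]
        rw [show (stirling2 q 0 : ℝ) = 0 from by
          cases q with
          | zero => omega
          | succ q' => rw [show stirling2 (q'+1) 0 = 0 from rfl]; simp]
        simp only [zero_mul, mul_zero, zero_add]
    _ = (n : ℝ) * (m : ℝ) ^ ((n : ℤ) - ((q : ℤ) - 1)) *
        ∑ k ∈ Finset.Icc 1 q, (stirling2 q k : ℝ) *
          (∑ j ∈ Finset.Icc 1 k, (-1 : ℝ) ^ (k - j) * (stirling1 k j : ℝ) * (n : ℝ) ^ (j - 1)) *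
          (m : ℝ) ^ (q - k) := by
        rw [mul_assoc, Finset.mul_sum, Finset.mul_sum]
        refine Finset.sum_congr rfl fun k hk => ?_
        rw [hInner k hk]
        rw [mem_Icc] at hk
        rcases le_or_gt k n with h | h
        · have hz : (m:ℝ)^((n:ℤ)-((q:ℤ)-1)) * (m:ℝ)^(q-k) = (m:ℝ)^(n-k) * m := by
            rw [show ((m:ℝ)^(q-k) : ℝ) = (m:ℝ)^(((q-k : ℕ)) : ℤ) from (zpow_natCast _ _).symm,
              ← zpow_add₀ hmne,
              show (n:ℤ)-((q:ℤ)-1) + ((q-k:ℕ):ℤ) = ((n-k:ℕ):ℤ) + 1 from by omega,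
              zpow_add₀ hmne, zpow_natCast, zpow_one]
          field_simp
          rw [mul_assoc ((stirling2 q k : ℝ) * (n.descFactorial k : ℝ)), hz]
          ring
        · rw [Nat.descFactorial_eq_zero_iff_lt.2 h]
          simp
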